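/- Fix integers k ≥ 1, m ≥ 1 and a time t > 0. Let {X_[r]j : r = 1,…,k; j = 1,…,m} be mutually independent nonnegative random variables where X_[r]j has CDF F_[r] with F_[r](t) > 0, and let K_[r](t) = (∫₀ᵗ F_[r](x)dx)/F_[r](t). Define V_r = Σ_{j=1}^{m} 1{X_[r]j ≤ t}, U_r = Σ_{j=1}^{m} (t − X_[r]j) 1{X_[r]j ≤ t}, and K_RSS(t) = (Σ_{r=1}^{k} U_r)·1{Σ_r V_r > 0}/(Σ_{r=1}^{k} V_r) (taken to be 0 when Σ_r V_r = 0). Then E[K_RSS(t)] = Σ_{v ∈ {0,…,m}^k, v₁+⋯+v_k > 0} [ p(v)/(v₁+⋯+v_k) ] · Σ_{r=1}^{k} v_r K_[r](t), where p(v) = Π_{r=1}^{k} C(m,v_r) F_[r](t)^{v_r} (1 − F_[r](t))^{m−v_r}. -/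

import Mathlib

open MeasureTheory ProbabilityTheory Finset
open scoped ENNReal


lemma aux_integral_prod {Ω ι : Type*} [MeasurableSpace Ω] {μ : Measure Ω}
    [IsProbabilityMeasure μ] {f : ι → Ω → ℝ}
    (hindep : iIndepFun f μ)
    (hmeas : ∀ i, Measurable (f i)) (s : Finset ι) :
    ∫ ω, ∏ i ∈ s, f i ω ∂μ = ∏ i ∈ s, ∫ ω, f i ω ∂μ := by
  classical
  induction s using Finset.induction_on with
  | empty => simp
  | @insert a s ha ih =>
    have hI : IndepFun (∏ j ∈ s, f j) (f a) μ :=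
      hindep.indepFun_finsetProd_of_notMem hmeas ha
    have hfn : (∏ j ∈ s, f j) = fun ω => ∏ i ∈ s, f i ω :=
      funext fun ω => Finset.prod_apply ω s f
    have hpm : Measurable (∏ j ∈ s, f j) := by
      rw [hfn]; exact Finset.measurable_prod s (fun i _ => hmeas i)
    have key := hI.integral_fun_mul_eq_mul_integral hpm.aestronglyMeasurable (hmeas a).aestronglyMeasurable
    have h1 : (∫ ω, ∏ i ∈ insert a s, f i ω ∂μ) = ∫ ω, (∏ j ∈ s, f j) ω * f a ω ∂μ := by
      apply integral_congr_ae
      filter_upwards with ω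
      rw [Finset.prod_insert ha, Finset.prod_apply, mul_comm]
    have h2 : integral μ (∏ j ∈ s, f j) = ∫ ω, ∏ i ∈ s, f i ω ∂μ := by rw [hfn]
    rw [h1, key, Finset.prod_insert ha, h2, ih, mul_comm]

lemma aux_layer_cake {Ω : Type*} [MeasurableSpace Ω] (μ : Measure Ω) [IsProbabilityMeasure μ]
    (Y : Ω → ℝ) (hY : Measurable Y) (hnn : ∀ ω, 0 ≤ Y ω) (t : ℝ) (ht : 0 < t) :
    ∫ ω, (t - Y ω) * (if Y ω ≤ t then (1:ℝ) else 0) ∂μ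
      = ∫ x in (0:ℝ)..t, (μ {ω | Y ω ≤ x}).toReal := by
  classical
  set g : Ω → ℝ := fun ω => (t - Y ω) * (if Y ω ≤ t then (1:ℝ) else 0) with hg
  have hgmeas : Measurable g :=
    (measurable_const.sub hY).mul
      (Measurable.ite (measurableSet_le hY measurable_const) measurable_const measurable_const)
  have hgnn : ∀ ω, 0 ≤ g ω := by
    intro ω; by_cases h : Y ω ≤ t <;> simp [hg, h, sub_nonneg]
  -- pointwise layer-cake identity
  have hpt : ∀ ω, ENNReal.ofReal (g ω)
      = ∫⁻ x in Set.Ioc (0:ℝ) t, Set.indicator {p : Ω × ℝ | Y p.1 ≤ p.2} (fun _ => (1:ℝ≥0∞)) (ω, x) := by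
    intro ω
    have hind : ∀ x : ℝ, Set.indicator {p : Ω × ℝ | Y p.1 ≤ p.2} (fun _ => (1:ℝ≥0∞)) (ω, x)
        = Set.indicator (Set.Ici (Y ω)) (fun _ => (1:ℝ≥0∞)) x := by
      intro x; simp [Set.indicator_apply, Set.mem_Ici, Set.mem_setOf_eq]
    simp_rw [hind]
    rw [lintegral_indicator measurableSet_Ici, setLIntegral_one,
      Measure.restrict_apply measurableSet_Ici]
    by_cases h : Y ω ≤ t
    · have h0 : 0 ≤ Y ω := hnn ω
      have hvol : volume (Set.Ici (Y ω) ∩ Set.Ioc 0 t) = ENNReal.ofReal (t - Y ω) := by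
        apply le_antisymm
        · calc volume (Set.Ici (Y ω) ∩ Set.Ioc 0 t) ≤ volume (Set.Icc (Y ω) t) := by
                apply measure_mono; rintro x ⟨hx1, _, hx3⟩; exact ⟨hx1, hx3⟩
          _ = ENNReal.ofReal (t - Y ω) := Real.volume_Icc
        · calc ENNReal.ofReal (t - Y ω) = volume (Set.Ioc (Y ω) t) := Real.volume_Ioc.symm
          _ ≤ volume (Set.Ici (Y ω) ∩ Set.Ioc 0 t) := by
                apply measure_mono; rintro x ⟨hx1, hx2⟩
                exact ⟨le_of_lt hx1, lt_of_le_of_lt h0 hx1, hx2⟩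
      rw [hvol, hg]; simp [h]
    · have hvol : Set.Ici (Y ω) ∩ Set.Ioc 0 t = ∅ := by
        ext x; simp only [Set.mem_inter_iff, Set.mem_Ici, Set.mem_Ioc, Set.mem_empty_iff_false,
          iff_false]
        rintro ⟨hx1, _, hx3⟩
        exact h (le_trans hx1 hx3)
      rw [hvol, hg]; simp [h]
  have hFmono : Monotone fun x : ℝ => μ {ω | Y ω ≤ x} :=
    fun a b hab => measure_mono (fun ω (h : Y ω ≤ a) => le_trans h hab)
  have hFmeas : Measurable fun x : ℝ => μ {ω | Y ω ≤ x} := hFmono.measurable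
  have hsetm : MeasurableSet {p : Ω × ℝ | Y p.1 ≤ p.2} :=
    measurableSet_le (hY.comp measurable_fst) measurable_snd
  set f2 : Ω → ℝ → ℝ≥0∞ :=
    fun ω x => Set.indicator {p : Ω × ℝ | Y p.1 ≤ p.2} (fun _ => (1:ℝ≥0∞)) (ω, x) with hf2
  have huncurry : Function.uncurry f2
      = Set.indicator {p : Ω × ℝ | Y p.1 ≤ p.2} (fun _ => (1:ℝ≥0∞)) := rfl
  have hswap : ∫⁻ ω, ENNReal.ofReal (g ω) ∂μ
      = ∫⁻ x in Set.Ioc (0:ℝ) t, μ {ω | Y ω ≤ x} := by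
    have s1 : ∫⁻ ω, ENNReal.ofReal (g ω) ∂μ
        = ∫⁻ ω, (∫⁻ x in Set.Ioc (0:ℝ) t, f2 ω x) ∂μ := lintegral_congr hpt
    have s2 : ∫⁻ ω, (∫⁻ x in Set.Ioc (0:ℝ) t, f2 ω x) ∂μ
        = ∫⁻ x in Set.Ioc (0:ℝ) t, (∫⁻ ω, f2 ω x ∂μ) := by
      apply lintegral_lintegral_swap
      rw [huncurry]
      exact (measurable_const.indicator hsetm).aemeasurable
    have s3 : ∫⁻ x in Set.Ioc (0:ℝ) t, (∫⁻ ω, f2 ω x ∂μ)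
        = ∫⁻ x in Set.Ioc (0:ℝ) t, μ {ω | Y ω ≤ x} := by
      apply setLIntegral_congr_fun measurableSet_Ioc
      intro x _
      have hx : (fun ω => f2 ω x) = Set.indicator {ω | Y ω ≤ x} (fun _ => (1:ℝ≥0∞)) := by
        funext ω; simp [hf2, Set.indicator_apply, Set.mem_setOf_eq]
      beta_reduce
      rw [hx]
      exact lintegral_indicator_one (hY measurableSet_Iic)
    rw [s1, s2, s3]
  rw [integral_eq_lintegral_of_nonneg_ae (ae_of_all _ hgnn) hgmeas.aestronglyMeasurable,
    hswap, intervalIntegral.integral_of_le ht.le,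
    integral_eq_lintegral_of_nonneg_ae (ae_of_all _ (fun x => ENNReal.toReal_nonneg))
      hFmeas.ennreal_toReal.aestronglyMeasurable]
  congr 1
  apply lintegral_congr
  intro x
  rw [ENNReal.ofReal_toReal (measure_ne_top μ _)]


theorem expectation_K_RSS
    {Ω : Type*} [MeasurableSpace Ω] (μ : Measure Ω) [IsProbabilityMeasure μ]
    (k m : ℕ) (hk : 1 ≤ k) (hm : 1 ≤ m) (t : ℝ) (ht : 0 < t)
    (X : Fin k → Fin m → Ω → ℝ) (hXmeas : ∀ r j, Measurable (X r j))
    (hXnn : ∀ r j ω, 0 ≤ X r j ω)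
    (hindep : iIndepFun (fun p : Fin k × Fin m => X p.1 p.2) μ)
    (Fr : Fin k → ℝ → ℝ) (hFr : ∀ r j x, Fr r x = (μ {ω | X r j ω ≤ x}).toReal)
    (hFrt : ∀ r, 0 < Fr r t)
    (Kr : Fin k → ℝ) (hKr : ∀ r, Kr r = (∫ x in (0:ℝ)..t, Fr r x) / Fr r t)
    (V : Fin k → Ω → ℝ)
    (hV : ∀ r ω, V r ω = ∑ j, (if X r j ω ≤ t then (1 : ℝ) else 0))
    (U : Fin k → Ω → ℝ)
    (hU : ∀ r ω, U r ω = ∑ j, (t - X r j ω) * (if X r j ω ≤ t then (1 : ℝ) else 0))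
    (KRSS : Ω → ℝ)
    (hKRSS : ∀ ω, KRSS ω =
      if 0 < ∑ r, V r ω then (∑ r, U r ω) / (∑ r, V r ω) else 0)
    (p : (Fin k → ℕ) → ℝ)
    (hp : ∀ v, p v = ∏ r, (m.choose (v r) : ℝ) * Fr r t ^ (v r) * (1 - Fr r t) ^ (m - v r)) :
    (∫ ω, KRSS ω ∂ μ)
      = ∑ v ∈ (Fintype.piFinset fun _ : Fin k => Finset.range (m + 1)).filter
            (fun v => 0 < ∑ r, v r),
          (p v / (∑ r, (v r : ℝ))) * ∑ r, (v r : ℝ) * Kr r := by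
  classical
  -- basic local definitions
  set phi : (Fin k → Finset (Fin m)) → (Fin k × Fin m) → ℝ → ℝ :=
    fun S q x => if (x ≤ t ↔ q.2 ∈ S q.1) then 1 else 0 with hphi
  set ind : (Fin k → Finset (Fin m)) → Ω → ℝ :=
    fun S ω => ∏ q : Fin k × Fin m, phi S q (X q.1 q.2 ω) with hind_def
  set tot : (Fin k → Finset (Fin m)) → ℝ := fun S => ∑ r, ((S r).card : ℝ) with htot
  set W : (Fin k → Finset (Fin m)) → Ω → ℝ :=
    fun S ω => (tot S)⁻¹ * ∑ r, ∑ j ∈ S r, ((t - X r j ω) * ind S ω) with hW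
  set S₀ : Ω → (Fin k → Finset (Fin m)) :=
    fun ω r => univ.filter (fun j => X r j ω ≤ t) with hS₀
  -- measurability of phi
  have hphi_meas : ∀ S q, Measurable (phi S q) := by
    intro S q
    by_cases hc : q.2 ∈ S q.1
    · simp only [hphi, hc, iff_true]
      exact Measurable.ite measurableSet_Iic measurable_const measurable_const
    · simp only [hphi, hc, iff_false]
      exact Measurable.ite measurableSet_Iic.compl measurable_const measurable_const
  -- ind as a single if
  have hind_eq : ∀ S ω, ind S ω =
      if (∀ q : Fin k × Fin m, (X q.1 q.2 ω ≤ t ↔ q.2 ∈ S q.1)) then 1 else 0 := by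
    intro S ω
    by_cases h : ∀ q : Fin k × Fin m, (X q.1 q.2 ω ≤ t ↔ q.2 ∈ S q.1)
    · rw [if_pos h]
      exact Finset.prod_eq_one (fun q _ => by simp [hphi, h q])
    · rw [if_neg h]
      obtain ⟨q, hq⟩ := not_forall.1 h
      exact Finset.prod_eq_zero (mem_univ q) (by simp [hphi, hq])
  have hcond : ∀ (S : Fin k → Finset (Fin m)) (ω),
      (∀ q : Fin k × Fin m, (X q.1 q.2 ω ≤ t ↔ q.2 ∈ S q.1)) ↔ S = S₀ ω := by
    intro S ω
    constructor
    · intro h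
      funext r; ext j
      simp only [hS₀, mem_filter, mem_univ, true_and]
      exact (h (r, j)).symm
    · rintro rfl q
      simp [hS₀]
  have hind' : ∀ S ω, ind S ω = if S = S₀ ω then 1 else 0 := by
    intro S ω; rw [hind_eq]
    by_cases h : S = S₀ ω
    · rw [if_pos ((hcond S ω).2 h), if_pos h]
    · rw [if_neg (fun hh => h ((hcond S ω).1 hh)), if_neg h]
  -- pointwise decomposition of KRSS
  have hpoint : ∀ ω, KRSS ω = ∑ S : Fin k → Finset (Fin m), W S ω := by
    intro ω
    have hW' : ∀ S, W S ω =
        if S = S₀ ω then (tot S)⁻¹ * ∑ r, ∑ j ∈ S r, (t - X r j ω) else 0 := by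
      intro S
      rw [hW]
      simp only
      rw [show (∑ r, ∑ j ∈ S r, ((t - X r j ω) * ind S ω))
          = (∑ r, ∑ j ∈ S r, (t - X r j ω)) * ind S ω by
        rw [Finset.sum_mul]; exact Finset.sum_congr rfl fun r _ => (Finset.sum_mul _ _ _).symm]
      rw [hind' S ω]
      by_cases h : S = S₀ ω <;> simp [h, mul_comm]
    rw [Finset.sum_congr rfl (fun S _ => hW' S), Finset.sum_ite_eq' univ (S₀ ω), if_pos (mem_univ _)]
    have hVc : ∀ r, V r ω = ((S₀ ω r).card : ℝ) := by
      intro r; rw [hV, hS₀]; simp [Finset.sum_boole]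
    have hUc : ∀ r, U r ω = ∑ j ∈ S₀ ω r, (t - X r j ω) := by
      intro r; rw [hU, hS₀]
      simp only [Finset.sum_filter, mem_univ, mul_ite, mul_one, mul_zero]
    have hsumV : ∑ r, V r ω = tot (S₀ ω) := by
      rw [htot]; exact Finset.sum_congr rfl fun r _ => hVc r
    rw [hKRSS]
    by_cases hpos : 0 < ∑ r, V r ω
    · rw [if_pos hpos, div_eq_inv_mul, hsumV]
      congr 1
      exact Finset.sum_congr rfl fun r _ => hUc r
    · rw [if_neg hpos]
      have h0 : tot (S₀ ω) = 0 := by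
        rw [← hsumV]
        have h1 : 0 ≤ ∑ r, V r ω := by
          rw [hsumV, htot]
          exact Finset.sum_nonneg fun r _ => by positivity
        linarith [not_lt.1 hpos]
      rw [h0, inv_zero, zero_mul]
  -- integrability
  have hind_meas : ∀ S, Measurable (ind S) := by
    intro S
    exact Finset.measurable_prod univ fun q _ => (hphi_meas S q).comp (hXmeas q.1 q.2)
  have hG_meas : ∀ S r j, Measurable (fun ω => (t - X r j ω) * ind S ω) :=
    fun S r j => (measurable_const.sub (hXmeas r j)).mul (hind_meas S)
  have hG_bdd : ∀ S r, ∀ j ∈ S r, ∀ ω, ‖(t - X r j ω) * ind S ω‖ ≤ t := by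
    intro S r j hj ω
    rw [hind_eq]
    by_cases h : ∀ q : Fin k × Fin m, (X q.1 q.2 ω ≤ t ↔ q.2 ∈ S q.1)
    · have hle : X r j ω ≤ t := (h (r, j)).2 hj
      have hge : 0 ≤ X r j ω := hXnn r j ω
      rw [if_pos h, mul_one, Real.norm_eq_abs, abs_le]
      constructor <;> linarith
    · rw [if_neg h, mul_zero, norm_zero]; linarith
  have hG_int : ∀ S r, ∀ j ∈ S r, Integrable (fun ω => (t - X r j ω) * ind S ω) μ := by
    intro S r j hj
    exact Integrable.mono' (integrable_const t) (hG_meas S r j).aestronglyMeasurable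
      (ae_of_all _ (hG_bdd S r j hj))
  have hW_int : ∀ S, Integrable (W S) μ := by
    intro S
    rw [hW]
    apply Integrable.const_mul
    apply integrable_finset_sum
    intro r _
    exact integrable_finset_sum _ (fun j hj => hG_int S r j hj)
  -- key integral computation
  set w : (Fin k → Finset (Fin m)) → (Fin k × Fin m) → ℝ :=
    fun S q => if q.2 ∈ S q.1 then Fr q.1 t else 1 - Fr q.1 t with hw
  set A : (Fin k → Finset (Fin m)) → ℝ := fun S => ∏ q : Fin k × Fin m, w S q with hA
  have hphi_int : ∀ S (q : Fin k × Fin m),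
      ∫ ω, phi S q (X q.1 q.2 ω) ∂μ = w S q := by
    intro S q
    by_cases hc : q.2 ∈ S q.1
    · have heq : (fun ω => phi S q (X q.1 q.2 ω))
          = Set.indicator {ω | X q.1 q.2 ω ≤ t} (fun _ => (1:ℝ)) := by
        funext ω; simp [hphi, hc, Set.indicator_apply]
      have hs : MeasurableSet {ω | X q.1 q.2 ω ≤ t} := hXmeas q.1 q.2 measurableSet_Iic
      rw [heq, integral_indicator_const (1:ℝ) hs]
      rw [hw]; simp [hc, hFr q.1 q.2 t, measureReal_def]
    · have heq : (fun ω => phi S q (X q.1 q.2 ω))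
          = Set.indicator {ω | X q.1 q.2 ω ≤ t}ᶜ (fun _ => (1:ℝ)) := by
        funext ω; simp [hphi, hc, Set.indicator_apply]
      have hs : MeasurableSet {ω | X q.1 q.2 ω ≤ t} := hXmeas q.1 q.2 measurableSet_Iic
      rw [heq, integral_indicator_const (1:ℝ) hs.compl]
      rw [measureReal_def, prob_compl_eq_one_sub hs]
      rw [hw]; simp [hc, hFr q.1 q.2 t,
        ENNReal.toReal_sub_of_le prob_le_one ENNReal.one_ne_top]
  have hG_integral : ∀ S r, ∀ j ∈ S r,
      ∫ ω, (t - X r j ω) * ind S ω ∂μ = Kr r * A S := by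
    intro S r j hj
    set hfun : (Fin k × Fin m) → ℝ → ℝ :=
      fun q x => (if q = (r, j) then (t - x) else 1) * phi S q x with hhfun
    have hfun_meas : ∀ q, Measurable (hfun q) := by
      intro q
      have h1 : Measurable fun x : ℝ => (if q = (r, j) then t - x else 1) := by
        by_cases hq : q = (r, j)
        · simpa [hq] using (by fun_prop : Measurable fun x : ℝ => t - x)
        · simpa [hq] using (measurable_const : Measurable fun _ : ℝ => (1:ℝ))
      exact h1.mul (hphi_meas S q)
    have hGeq : (fun ω => (t - X r j ω) * ind S ω)
        = fun ω => ∏ q : Fin k × Fin m, hfun q (X q.1 q.2 ω) := by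
      funext ω
      have e1 : ind S ω = phi S (r, j) (X r j ω) * ∏ q ∈ univ.erase (r, j), phi S q (X q.1 q.2 ω) := by
        rw [hind_def]
        exact (Finset.mul_prod_erase univ (fun q => phi S q (X q.1 q.2 ω)) (mem_univ (r, j))).symm
      have e2 : (∏ q : Fin k × Fin m, hfun q (X q.1 q.2 ω))
          = hfun (r, j) (X r j ω) * ∏ q ∈ univ.erase (r, j), hfun q (X q.1 q.2 ω) :=
        (Finset.mul_prod_erase univ (fun q => hfun q (X q.1 q.2 ω)) (mem_univ (r, j))).symm
      have h1 : ∏ q ∈ univ.erase (r, j), hfun q (X q.1 q.2 ω)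
          = ∏ q ∈ univ.erase (r, j), phi S q (X q.1 q.2 ω) := by
        refine Finset.prod_congr rfl fun q hq => ?_
        rw [hhfun]; simp [Finset.ne_of_mem_erase hq]
      have h5 : hfun (r, j) (X r j ω) = (t - X r j ω) * phi S (r, j) (X r j ω) := by
        rw [hhfun]; simp
      rw [e1, e2, h1, h5]; ring
    have hic : iIndepFun
        (fun q : Fin k × Fin m => fun ω => hfun q (X q.1 q.2 ω)) μ :=
      hindep.comp hfun hfun_meas
    rw [hGeq, aux_integral_prod hic
      (fun q => (hfun_meas q).comp (hXmeas q.1 q.2)) univ]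
    rw [← Finset.mul_prod_erase univ _ (mem_univ (r, j))]
    have h2 : ∫ ω, hfun (r, j) (X r j ω) ∂μ = Kr r * Fr r t := by
      have heq : (fun ω => hfun (r, j) (X r j ω))
          = fun ω => (t - X r j ω) * (if X r j ω ≤ t then (1:ℝ) else 0) := by
        funext ω; rw [hhfun, hphi]; simp [hj]
      rw [heq, aux_layer_cake μ (X r j) (hXmeas r j) (hXnn r j) t ht]
      have : (∫ x in (0:ℝ)..t, (μ {ω | X r j ω ≤ x}).toReal) = ∫ x in (0:ℝ)..t, Fr r x := by
        apply intervalIntegral.integral_congr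
        intro x _
        exact (hFr r j x).symm
      rw [this, hKr r]
      exact (div_mul_cancel₀ _ (hFrt r).ne').symm
    have h3 : ∏ q ∈ univ.erase (r, j), (∫ ω, hfun q (X q.1 q.2 ω) ∂μ)
        = ∏ q ∈ univ.erase (r, j), w S q := by
      refine Finset.prod_congr rfl fun q hq => ?_
      have hq' : q ≠ (r, j) := Finset.ne_of_mem_erase hq
      have : (fun ω => hfun q (X q.1 q.2 ω)) = fun ω => phi S q (X q.1 q.2 ω) := by
        funext ω; rw [hhfun]; simp [hq']
      rw [this, hphi_int S q]
    rw [h2, h3]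
    have h4 : A S = Fr r t * ∏ q ∈ univ.erase (r, j), w S q := by
      simp only [hA]
      rw [← Finset.mul_prod_erase univ (w S) (mem_univ (r, j))]
      congr 1
      simp only [hw]; simp [hj]
    rw [h4]; ring
  -- integral of W S
  have hW_integral : ∀ S, ∫ ω, W S ω ∂μ
      = (tot S)⁻¹ * (∑ r, ((S r).card : ℝ) * Kr r) * A S := by
    intro S
    simp only [hW]
    rw [integral_const_mul]
    rw [integral_finset_sum _ (fun r _ => integrable_finset_sum _ (fun j hj => hG_int S r j hj))]
    have hinner : ∀ r : Fin k, ∫ ω, (∑ j ∈ S r, ((t - X r j ω) * ind S ω)) ∂μ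
        = ((S r).card : ℝ) * (Kr r * A S) := by
      intro r
      rw [integral_finset_sum _ (fun j hj => hG_int S r j hj)]
      rw [Finset.sum_congr rfl (fun j hj => hG_integral S r j hj), Finset.sum_const,
        nsmul_eq_mul]
    rw [Finset.sum_congr rfl (fun r _ => hinner r)]
    have : ∑ r, ((S r).card : ℝ) * (Kr r * A S) = (∑ r, ((S r).card : ℝ) * Kr r) * A S := by
      rw [Finset.sum_mul]
      exact Finset.sum_congr rfl fun r _ => by ring
    rw [this, mul_assoc]
  -- rewrite A S in terms of cardinalities
  have hAcard : ∀ S, A S = ∏ r, (Fr r t ^ (S r).card * (1 - Fr r t) ^ (m - (S r).card)) := by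
    intro S
    simp only [hA, hw]
    rw [Fintype.prod_prod_type]
    refine Finset.prod_congr rfl fun r _ => ?_
    rw [← Finset.prod_filter_mul_prod_filter_not univ (fun j => j ∈ S r)]
    have h1 : univ.filter (fun j => j ∈ S r) = S r := by ext j; simp
    have h2 : (univ.filter (fun j => ¬ j ∈ S r)).card = m - (S r).card := by
      rw [Finset.filter_not, h1, Finset.card_sdiff_of_subset (Finset.subset_univ _), Finset.card_univ,
        Fintype.card_fin]
    congr 1
    · have e : ∀ j ∈ univ.filter (fun j => j ∈ S r),
          (if (r, j).2 ∈ S (r, j).1 then Fr (r, j).1 t else 1 - Fr (r, j).1 t)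
            = Fr r t := by
        intro j hj; simp [(Finset.mem_filter.1 hj).2]
      exact (Finset.prod_congr rfl e).trans (by rw [Finset.prod_const, h1])
    · have e : ∀ j ∈ univ.filter (fun j => ¬ j ∈ S r),
          (if (r, j).2 ∈ S (r, j).1 then Fr (r, j).1 t else 1 - Fr (r, j).1 t)
            = 1 - Fr r t := by
        intro j hj; simp [(Finset.mem_filter.1 hj).2]
      exact (Finset.prod_congr rfl e).trans (by rw [Finset.prod_const, h2])
  -- the function of the cardinality vector
  set f : (Fin k → ℕ) → ℝ := fun v => (∑ r, (v r : ℝ))⁻¹ * (∑ r, (v r : ℝ) * Kr r)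
      * ∏ r, (Fr r t ^ v r * (1 - Fr r t) ^ (m - v r)) with hf
  have hWf : ∀ S, ∫ ω, W S ω ∂μ = f (fun r => (S r).card) := by
    intro S
    rw [hW_integral S, hAcard S]
  have hmaps : ∀ S : Fin k → Finset (Fin m), (S ∈ (univ : Finset (Fin k → Finset (Fin m)))) →
      (fun r => (S r).card) ∈ Fintype.piFinset (fun _ : Fin k => Finset.range (m + 1)) := by
    intro S _
    rw [Fintype.mem_piFinset]
    intro r
    rw [Finset.mem_range, Nat.lt_succ_iff]
    simpa using Finset.card_le_univ (S r)
  have hfib_card : ∀ v : Fin k → ℕ,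
      ((univ : Finset (Fin k → Finset (Fin m))).filter
        (fun S => (fun r => (S r).card) = v)).card = ∏ r, m.choose (v r) := by
    intro v
    have hfib : (univ : Finset (Fin k → Finset (Fin m))).filter
        (fun S => (fun r => (S r).card) = v)
        = Fintype.piFinset (fun r => (univ : Finset (Fin m)).powersetCard (v r)) := by
      ext S
      simp [Fintype.mem_piFinset, Finset.mem_powersetCard_univ, funext_iff]
    rw [hfib, Fintype.card_piFinset]
    exact Finset.prod_congr rfl fun r _ => by
      rw [Finset.card_powersetCard, Finset.card_univ, Fintype.card_fin]
  -- assembling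
  calc ∫ ω, KRSS ω ∂μ
      = ∫ ω, (∑ S : Fin k → Finset (Fin m), W S ω) ∂μ :=
        integral_congr_ae (ae_of_all _ hpoint)
    _ = ∑ S : Fin k → Finset (Fin m), ∫ ω, W S ω ∂μ :=
        integral_finset_sum univ (fun S _ => hW_int S)
    _ = ∑ S : Fin k → Finset (Fin m), f (fun r => (S r).card) :=
        Finset.sum_congr rfl fun S _ => hWf S
    _ = ∑ v ∈ Fintype.piFinset (fun _ : Fin k => Finset.range (m + 1)),
          ∑ S ∈ (univ : Finset (Fin k → Finset (Fin m))).filter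
            (fun S => (fun r => (S r).card) = v), f v :=
        (Finset.sum_fiberwise_of_maps_to' hmaps f).symm
    _ = ∑ v ∈ Fintype.piFinset (fun _ : Fin k => Finset.range (m + 1)),
          (∏ r, (m.choose (v r) : ℝ)) * f v := by
        refine Finset.sum_congr rfl fun v _ => ?_
        rw [Finset.sum_const, nsmul_eq_mul, hfib_card v]
        push_cast
        ring
    _ = ∑ v ∈ (Fintype.piFinset fun _ : Fin k => Finset.range (m + 1)).filter
            (fun v => 0 < ∑ r, v r),
          (∏ r, (m.choose (v r) : ℝ)) * f v := by
        symm
        apply Finset.sum_filter_of_ne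
        intro v _ hne
        by_contra hz
        apply hne
        have hsum : ∑ r, v r = 0 := Nat.eq_zero_of_not_pos hz
        have hvr : ∀ r, v r = 0 := by
          intro r
          exact (Finset.sum_eq_zero_iff.1 hsum) r (mem_univ r)
        simp [hf, hvr]
    _ = ∑ v ∈ (Fintype.piFinset fun _ : Fin k => Finset.range (m + 1)).filter
            (fun v => 0 < ∑ r, v r),
          (p v / (∑ r, (v r : ℝ))) * ∑ r, (v r : ℝ) * Kr r := by
        refine Finset.sum_congr rfl fun v _ => ?_
        rw [hp v, hf]
        have hsplit : ∏ r, ((m.choose (v r) : ℝ) * Fr r t ^ (v r) * (1 - Fr r t) ^ (m - v r))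
            = (∏ r, (m.choose (v r) : ℝ))
              * ∏ r, (Fr r t ^ (v r) * (1 - Fr r t) ^ (m - v r)) := by
          rw [← Finset.prod_mul_distrib]
          exact Finset.prod_congr rfl fun r _ => by ring
        rw [hsplit, div_eq_mul_inv]
        ring
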